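/- For every n ≥ 3, the grog number of the path graph satisfies g(P_{n+1}) = g(P_n) + (n−1). -/

import Mathlib

/-- A state of the Grog algorithm: a finite set of remaining arcs (on vertices `v_1, v_2, …`,
identified with positive naturals) together with the current population of every vertex. -/
structure PPState where
  arcs : Finset (ℕ × ℕ)
  pop : ℕ → ℕ

/-- One predation step along the arc `a = (u, w)`: the arc is deleted and the populations
of `u` and `w` each decrease by `1`. -/
def predStep (s : PPState) (a : ℕ × ℕ) : PPState :=
  ⟨s.arcs.erase a, fun v => if v = a.1 ∨ v = a.2 then s.pop v - 1 else s.pop v⟩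

/-- The arc `a` may be predated along in state `s`: it is a current arc and both of its
endpoints have current population at least `1`. -/
def validArc (s : PPState) (a : ℕ × ℕ) : Prop :=
  a ∈ s.arcs ∧ 1 ≤ s.pop a.1 ∧ 1 ≤ s.pop a.2

/-- Run a sequence of predation steps from a state. -/
def runSeq : PPState → List (ℕ × ℕ) → PPState
  | s, [] => s
  | s, a :: l => runSeq (predStep s a) l

/-- The sequence of predation steps is valid from state `s`. -/
def ValidSeq : PPState → List (ℕ × ℕ) → Prop
  | _, [] => True
  | s, a :: l => validArc s a ∧ ValidSeq (predStep s a) l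

/-- No further predation step is possible. -/
def Terminal (s : PPState) : Prop := ∀ a ∈ s.arcs, ¬ validArc s a

/-- A predator-prey strategy from state `s`: a maximal valid sequence of predation steps. -/
def IsStrategy (s : PPState) (l : List (ℕ × ℕ)) : Prop :=
  ValidSeq s l ∧ Terminal (runSeq s l)

/-- The initial state of the digraph with arc set `A`, with initial populations `ρ(v_i) = i`. -/
def initState (A : Finset (ℕ × ℕ)) : PPState := ⟨A, id⟩

/-- The (residual) population of a state, summed over the vertices `v_1, …, v_n`. -/
def resid (n : ℕ) (s : PPState) : ℕ := ∑ v ∈ Finset.Icc 1 n, s.pop v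

/-- The grog number of the digraph on `v_1, …, v_n` with arc set `A`: the minimum of the
residual population over all predator-prey strategies. -/
noncomputable def grogD (n : ℕ) (A : Finset (ℕ × ℕ)) : ℕ :=
  sInf {r | ∃ l, IsStrategy (initState A) l ∧ resid n (runSeq (initState A) l) = r}

/-- `A` is an orientation of the labelled graph obtained from the simple graph `G` via the
bijective labelling `f` of its vertices by `v_1, …, v_n`. -/
def LabelledOrientation {V : Type*} (G : SimpleGraph V) (n : ℕ) (f : V → ℕ)
    (A : Finset (ℕ × ℕ)) : Prop :=
  Function.Injective f ∧ Set.range f = ↑(Finset.Icc 1 n) ∧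
  (∀ u v, G.Adj u v ↔ ((f u, f v) ∈ A ∨ (f v, f u) ∈ A)) ∧
  (∀ u v, ¬(((f u, f v) ∈ A) ∧ ((f v, f u) ∈ A))) ∧
  (∀ a ∈ A, ∃ u v, G.Adj u v ∧ a = (f u, f v))

/-- `A` is an orientation of the path `P_n` whose vertices, in path order, are labelled
`p 0, p 1, …, p (n-1)`, where `p` is a bijection onto `{1, …, n}`. -/
def PathOrientation (n : ℕ) (p : ℕ → ℕ) (A : Finset (ℕ × ℕ)) : Prop :=
  Set.BijOn p (Set.Iio n) (Set.Icc 1 n) ∧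
  (∀ i, i + 1 < n →
    (((p i, p (i+1)) ∈ A ∨ (p (i+1), p i) ∈ A) ∧
      ¬(((p i, p (i+1)) ∈ A) ∧ ((p (i+1), p i) ∈ A)))) ∧
  (∀ a ∈ A, ∃ i, i + 1 < n ∧ (a = (p i, p (i+1)) ∨ a = (p (i+1), p i)))

/-- `A` is an orientation of the cycle `C_n` whose vertices, in cyclic order, are labelled
`p 0, p 1, …, p (n-1)`, where `p` is a bijection onto `{1, …, n}`. -/
def CycleOrientation (n : ℕ) (p : ℕ → ℕ) (A : Finset (ℕ × ℕ)) : Prop :=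
  Set.BijOn p (Set.Iio n) (Set.Icc 1 n) ∧
  (∀ i < n,
    (((p i, p ((i+1) % n)) ∈ A ∨ (p ((i+1) % n), p i) ∈ A) ∧
      ¬(((p i, p ((i+1) % n)) ∈ A) ∧ ((p ((i+1) % n), p i) ∈ A)))) ∧
  (∀ a ∈ A, ∃ i < n, a = (p i, p ((i+1) % n)) ∨ a = (p ((i+1) % n), p i))

/-- The grog number of the path graph `P_n`: the minimum of the grog number over all
bijective labellings of its vertices by `v_1, …, v_n` and all orientations. -/
noncomputable def grogPath (n : ℕ) : ℕ :=
  sInf {r | ∃ (p : ℕ → ℕ) (A : Finset (ℕ × ℕ)), PathOrientation n p A ∧ grogD n A = r}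

/-! ### Auxiliary lemmas -/

section Aux

open Finset

lemma runSeq_append (s : PPState) (l1 l2 : List (ℕ × ℕ)) :
    runSeq s (l1 ++ l2) = runSeq (runSeq s l1) l2 := by
  induction l1 generalizing s with
  | nil => rfl
  | cons a l ih => simp [runSeq, ih]

lemma validSeq_append (s : PPState) (l1 l2 : List (ℕ × ℕ)) :
    ValidSeq s (l1 ++ l2) ↔ ValidSeq s l1 ∧ ValidSeq (runSeq s l1) l2 := by
  induction l1 generalizing s with
  | nil => simp [ValidSeq, runSeq]
  | cons a l ih => simp [ValidSeq, runSeq, ih, and_assoc]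

lemma length_le_card {s : PPState} {l : List (ℕ × ℕ)} (h : ValidSeq s l) :
    l.length ≤ s.arcs.card := by
  induction l generalizing s with
  | nil => simp
  | cons a t ih =>
    obtain ⟨⟨ha, -, -⟩, hv⟩ := h
    have h1 := ih hv
    have hc : (predStep s a).arcs.card = s.arcs.card - 1 :=
      Finset.card_erase_of_mem ha
    have hpos : 0 < s.arcs.card := Finset.card_pos.mpr ⟨a, ha⟩
    simp only [List.length_cons]
    omega

lemma exists_strategy_aux : ∀ (m : ℕ) (s : PPState), s.arcs.card ≤ m →
    ∃ l, IsStrategy s l := by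
  intro m
  induction m with
  | zero =>
    intro s hs
    refine ⟨[], trivial, ?_⟩
    intro a ha hv
    simp only [runSeq] at ha
    rw [Finset.card_eq_zero.mp (Nat.le_zero.mp hs)] at ha
    exact absurd ha (Finset.notMem_empty a)
  | succ m ih =>
    intro s hs
    by_cases h : ∃ a, validArc s a
    · obtain ⟨a, hv⟩ := h
      have ha : a ∈ s.arcs := hv.1
      obtain ⟨l, hl1, hl2⟩ := ih (predStep s a) (by
        have h1 : (predStep s a).arcs.card = s.arcs.card - 1 :=
          Finset.card_erase_of_mem ha
        have h2 : 0 < s.arcs.card := Finset.card_pos.mpr ⟨a, ha⟩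
        omega)
      exact ⟨a :: l, ⟨hv, hl1⟩, hl2⟩
    · exact ⟨[], trivial, fun a _ hv => h ⟨a, hv⟩⟩

lemma exists_strategy (s : PPState) : ∃ l, IsStrategy s l :=
  exists_strategy_aux s.arcs.card s le_rfl

lemma resid_le_predStep (n : ℕ) (s : PPState) (a : ℕ × ℕ) :
    resid n s ≤ resid n (predStep s a) + 2 := by
  classical
  unfold resid predStep
  simp only
  have h1 : ∀ v ∈ Finset.Icc 1 n,
      s.pop v ≤ (if v = a.1 ∨ v = a.2 then s.pop v - 1 else s.pop v)
        + ((if v = a.1 then 1 else 0) + (if v = a.2 then 1 else 0)) := by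
    intro v _
    split_ifs <;> omega
  calc ∑ v ∈ Finset.Icc 1 n, s.pop v
      ≤ ∑ v ∈ Finset.Icc 1 n, ((if v = a.1 ∨ v = a.2 then s.pop v - 1 else s.pop v)
        + ((if v = a.1 then 1 else 0) + (if v = a.2 then 1 else 0))) :=
        Finset.sum_le_sum h1
    _ = (∑ v ∈ Finset.Icc 1 n, if v = a.1 ∨ v = a.2 then s.pop v - 1 else s.pop v)
        + ((∑ v ∈ Finset.Icc 1 n, if v = a.1 then 1 else 0)
          + (∑ v ∈ Finset.Icc 1 n, if v = a.2 then 1 else 0)) := by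
        rw [Finset.sum_add_distrib, Finset.sum_add_distrib]
    _ ≤ _ := by
        rw [Finset.sum_ite_eq' (Finset.Icc 1 n) a.1 (fun _ => 1),
          Finset.sum_ite_eq' (Finset.Icc 1 n) a.2 (fun _ => 1)]
        split_ifs <;> omega

lemma resid_le_runSeq (n : ℕ) (s : PPState) (l : List (ℕ × ℕ)) :
    resid n s ≤ resid n (runSeq s l) + 2 * l.length := by
  induction l generalizing s with
  | nil => simp [runSeq]
  | cons a t ih =>
    have h1 := resid_le_predStep n s a
    have h2 := ih (predStep s a)
    simp only [runSeq, List.length_cons]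
    omega

lemma resid_predStep_eq (n : ℕ) (s : PPState) (a : ℕ × ℕ)
    (h1 : 1 ≤ s.pop a.1) (h2 : 1 ≤ s.pop a.2) (hne : a.1 ≠ a.2)
    (ha1 : a.1 ∈ Finset.Icc 1 n) (ha2 : a.2 ∈ Finset.Icc 1 n) :
    resid n (predStep s a) + 2 = resid n s := by
  classical
  unfold resid predStep
  simp only
  have key : ∀ v ∈ Finset.Icc 1 n,
      s.pop v = (if v = a.1 ∨ v = a.2 then s.pop v - 1 else s.pop v)
        + ((if v = a.1 then 1 else 0) + (if v = a.2 then 1 else 0)) := by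
    intro v _
    rcases eq_or_ne v a.1 with rfl | hv1
    · rw [if_pos (Or.inl rfl), if_pos rfl, if_neg hne]
      omega
    · rcases eq_or_ne v a.2 with rfl | hv2
      · rw [if_pos (Or.inr rfl), if_neg hv1, if_pos rfl]
        omega
      · simp [hv1, hv2]
  rw [Finset.sum_congr rfl key, Finset.sum_add_distrib, Finset.sum_add_distrib,
    Finset.sum_ite_eq' (Finset.Icc 1 n) a.1 (fun _ => 1),
    Finset.sum_ite_eq' (Finset.Icc 1 n) a.2 (fun _ => 1),
    if_pos ha1, if_pos ha2]

lemma card_le_of_pathOrientation {n : ℕ} {p : ℕ → ℕ} {A : Finset (ℕ × ℕ)}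
    (h : PathOrientation n p A) : A.card ≤ n - 1 := by
  classical
  obtain ⟨-, h2, h3⟩ := h
  have hmain : A.card ≤ (Finset.range (n - 1)).card := by
    apply Finset.card_le_card_of_injOn
      (fun a => if h : ∃ i, i + 1 < n ∧ (a = (p i, p (i+1)) ∨ a = (p (i+1), p i))
        then h.choose else 0)
    · intro a ha
      have hex := h3 a ha
      beta_reduce
      rw [dif_pos hex]
      have hsp := hex.choose_spec
      rw [Finset.mem_coe, Finset.mem_range]
      omega
    · intro a ha b hb hab
      have ha' : a ∈ A := Finset.mem_coe.mp ha
      have hb' : b ∈ A := Finset.mem_coe.mp hb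
      have hea := h3 a ha'
      have heb := h3 b hb'
      beta_reduce at hab
      rw [dif_pos hea, dif_pos heb] at hab
      obtain ⟨hia, hpa⟩ := hea.choose_spec
      obtain ⟨hib, hpb⟩ := heb.choose_spec
      rw [hab] at hpa
      have hboth := (h2 heb.choose hib).2
      rcases hpa with h1 | h1 <;> rcases hpb with h1' | h1'
      · exact h1.trans h1'.symm
      · exact absurd ⟨h1 ▸ ha', h1' ▸ hb'⟩ hboth
      · exact absurd ⟨h1' ▸ hb', h1 ▸ ha'⟩ hboth
      · exact h1.trans h1'.symm
  rwa [Finset.card_range] at hmain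

lemma resid_initState (n : ℕ) (A : Finset (ℕ × ℕ)) :
    resid n (initState A) = ∑ v ∈ Finset.Icc 1 n, v := by
  simp [resid, initState]

lemma grogD_ge {n : ℕ} {p : ℕ → ℕ} {A : Finset (ℕ × ℕ)}
    (h : PathOrientation n p A) :
    (∑ v ∈ Finset.Icc 1 n, v) - 2 * (n - 1) ≤ grogD n A := by
  have hcard : A.card ≤ n - 1 := card_le_of_pathOrientation h
  obtain ⟨l0, hl0⟩ := exists_strategy (initState A)
  have hne : {r | ∃ l, IsStrategy (initState A) l ∧
      resid n (runSeq (initState A) l) = r}.Nonempty := ⟨_, l0, hl0, rfl⟩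
  refine le_csInf hne ?_
  rintro r ⟨l, ⟨hvl, -⟩, rfl⟩
  have h1 := resid_le_runSeq n (initState A) l
  have h2 : l.length ≤ A.card := length_le_card hvl
  rw [resid_initState] at h1
  omega

/-! ### The explicit optimal labelled orientation of the path -/

def pathArcs (n : ℕ) : Finset (ℕ × ℕ) := (Finset.Icc 1 (n-1)).image (fun k => (k, k+1))

def dcount (j v : ℕ) : ℕ :=
  (if 1 ≤ v ∧ v ≤ j then 1 else 0) + (if 2 ≤ v ∧ v ≤ j + 1 then 1 else 0)

def stateAfter (n j : ℕ) : PPState :=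
  ⟨(Finset.Icc (j+1) (n-1)).image (fun k => (k, k+1)), fun v => v - dcount j v⟩

lemma pathOrientation_explicit (n : ℕ) :
    PathOrientation n (fun i => i + 1) (pathArcs n) := by
  refine ⟨⟨?_, ?_, ?_⟩, ?_, ?_⟩
  · intro i hi
    simp only [Set.mem_Iio] at hi
    simp only [Set.mem_Icc]
    omega
  · intro i _ j _ hij
    exact Nat.add_right_cancel hij
  · intro m hm
    simp only [Set.mem_Icc] at hm
    exact ⟨m - 1, by simp only [Set.mem_Iio]; omega, by show m - 1 + 1 = m; omega⟩
  · intro i hi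
    constructor
    · left
      simp only [pathArcs, Finset.mem_image, Finset.mem_Icc]
      exact ⟨i + 1, by omega, rfl⟩
    · rintro ⟨-, hrev⟩
      simp only [pathArcs, Finset.mem_image, Finset.mem_Icc, Prod.mk.injEq] at hrev
      obtain ⟨k, hk, hk1, hk2⟩ := hrev
      omega
  · intro a ha
    simp only [pathArcs, Finset.mem_image, Finset.mem_Icc] at ha
    obtain ⟨k, hk, rfl⟩ := ha
    refine ⟨k - 1, by omega, Or.inl ?_⟩
    simp only [Prod.mk.injEq]
    omega

lemma run_invariant (n : ℕ) (hn : 1 ≤ n) : ∀ j, j ≤ n - 1 →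
    ValidSeq (initState (pathArcs n)) ((List.range j).map (fun i => (i+1, i+2))) ∧
    runSeq (initState (pathArcs n)) ((List.range j).map (fun i => (i+1, i+2)))
      = stateAfter n j ∧
    resid n (stateAfter n j) + 2 * j = resid n (initState (pathArcs n)) := by
  intro j
  induction j with
  | zero =>
    intro _
    have h0 : initState (pathArcs n) = stateAfter n 0 := by
      unfold initState stateAfter pathArcs
      congr 1
      funext v
      simp only [id, dcount]
      split_ifs <;> omega
    refine ⟨trivial, ?_, ?_⟩
    · simp only [List.range_zero, List.map_nil]
      exact h0
    · rw [← h0]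
      omega
  | succ j ih =>
    intro hj
    obtain ⟨hv, hr, hres⟩ := ih (by omega)
    have hmem : ((j+1 : ℕ), (j+2 : ℕ)) ∈ (stateAfter n j).arcs := by
      simp only [stateAfter, Finset.mem_image, Finset.mem_Icc]
      exact ⟨j + 1, ⟨le_refl _, by omega⟩, rfl⟩
    have hp1 : 1 ≤ (stateAfter n j).pop (j+1) := by
      simp only [stateAfter, dcount]
      split_ifs <;> omega
    have hp2 : 1 ≤ (stateAfter n j).pop (j+2) := by
      simp only [stateAfter, dcount]
      split_ifs <;> omega
    have hvalid : validArc (stateAfter n j) (j+1, j+2) := ⟨hmem, hp1, hp2⟩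
    have hpred : predStep (stateAfter n j) (j+1, j+2) = stateAfter n (j+1) := by
      unfold predStep stateAfter
      congr 1
      · ext ⟨x, y⟩
        simp only [Finset.mem_erase, Finset.mem_image, Finset.mem_Icc, Prod.mk.injEq,
          ne_eq, not_and]
        constructor
        · rintro ⟨hne, k, hk, rfl, rfl⟩
          exact ⟨k, ⟨by omega, hk.2⟩, rfl, rfl⟩
        · rintro ⟨k, hk, rfl, rfl⟩
          exact ⟨by omega, k, ⟨by omega, hk.2⟩, rfl, rfl⟩
      · funext v
        simp only [dcount]
        split_ifs <;> omega
    have hlist : (List.range (j+1)).map (fun i => (i+1, i+2))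
        = (List.range j).map (fun i => (i+1, i+2)) ++ [(j+1, j+2)] := by
      rw [List.range_succ, List.map_append]
      rfl
    refine ⟨?_, ?_, ?_⟩
    · rw [hlist, validSeq_append, hr]
      exact ⟨hv, hvalid, trivial⟩
    · rw [hlist, runSeq_append, hr]
      show predStep (stateAfter n j) (j+1, j+2) = stateAfter n (j+1)
      exact hpred
    · have hexact := resid_predStep_eq n (stateAfter n j) (j+1, j+2) hp1 hp2
        (by omega) (by rw [Finset.mem_Icc]; omega) (by rw [Finset.mem_Icc]; omega)
      rw [hpred] at hexact
      omega

lemma grogD_pathArcs (n : ℕ) (hn : 3 ≤ n) :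
    grogD n (pathArcs n) = (∑ v ∈ Finset.Icc 1 n, v) - 2 * (n - 1) := by
  have hlb := grogD_ge (pathOrientation_explicit n)
  obtain ⟨hv, hr, hres⟩ := run_invariant n (by omega) (n - 1) le_rfl
  have hterm : Terminal (stateAfter n (n - 1)) := by
    intro a ha
    exfalso
    simp only [stateAfter, Finset.mem_image, Finset.mem_Icc] at ha
    obtain ⟨k, hk, -⟩ := ha
    omega
  have hub : grogD n (pathArcs n) ≤ (∑ v ∈ Finset.Icc 1 n, v) - 2 * (n - 1) := by
    apply Nat.sInf_le
    refine ⟨_, ⟨hv, by rw [hr]; exact hterm⟩, ?_⟩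
    rw [hr, ← resid_initState n (pathArcs n)]
    omega
  omega

lemma grogPath_eq (n : ℕ) (hn : 3 ≤ n) :
    grogPath n = (∑ v ∈ Finset.Icc 1 n, v) - 2 * (n - 1) := by
  apply le_antisymm
  · exact Nat.sInf_le ⟨_, _, pathOrientation_explicit n, grogD_pathArcs n hn⟩
  · have hne : {r | ∃ (p : ℕ → ℕ) (A : Finset (ℕ × ℕ)),
        PathOrientation n p A ∧ grogD n A = r}.Nonempty :=
      ⟨_, _, _, pathOrientation_explicit n, grogD_pathArcs n hn⟩
    refine le_csInf hne ?_
    rintro r ⟨p, A, hPO, rfl⟩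
    exact grogD_ge hPO

lemma T_ge (n : ℕ) : 2 * n ≤ (∑ v ∈ Finset.Icc 1 n, v) + 2 := by
  induction n with
  | zero => simp
  | succ m ih =>
    rw [Finset.sum_Icc_succ_top (by omega : 1 ≤ m + 1)]
    omega

end Aux

/-- For every `n ≥ 3`, `g(P_{n+1}) = g(P_n) + (n - 1)`. -/
theorem grog_number_of_path (n : ℕ) (hn : 3 ≤ n) :
    grogPath (n + 1) = grogPath n + (n - 1) := by
  have h1 := grogPath_eq n hn
  have h2 := grogPath_eq (n + 1) (by omega)
  have hstep : ∑ v ∈ Finset.Icc 1 (n + 1), v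
      = (∑ v ∈ Finset.Icc 1 n, v) + (n + 1) :=
    Finset.sum_Icc_succ_top (by omega) _
  have hge := T_ge n
  omega
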